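/- arXiv:1710.04962 — 5 statements merged into one kernel-verified Lean document; each statement's English description precedes it below -/
import Mathlib

section
/- Let a, b be real numbers with a ≥ 1 and b ≥ 1, and let m be a positive integer satisfying m ≤ a · b^{ν(m)}, where ν(m) is the number of distinct prime divisors of m. Then m ≤ 16 · a² · exp(b⁶). -/
/-- A finset of naturals all at least `2` has product at least `(card + 1)!`. -/
lemma aux_prod_ge_factorial (s : Finset ℕ) (h2 : ∀ p ∈ s, 2 ≤ p) :
    (s.card + 1).factorial ≤ ∏ p ∈ s, p := by
  induction s using Finset.induction_on_max with
  | empty => simp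
  | insert a s hmax ih =>
    have ha2 : 2 ≤ a := h2 a (Finset.mem_insert_self a s)
    have has : a ∉ s := fun hmem => lt_irrefl a (hmax a hmem)
    have hsub : s ⊆ Finset.Ico 2 a := by
      intro x hx
      exact Finset.mem_Ico.mpr ⟨h2 x (Finset.mem_insert_of_mem hx), hmax x hx⟩
    have hcard : s.card ≤ a - 2 := by
      simpa using Finset.card_le_card hsub
    have hak : s.card + 2 ≤ a := by omega
    rw [Finset.card_insert_of_notMem has, Finset.prod_insert has]
    calc (s.card + 1 + 1).factorial = (s.card + 2) * (s.card + 1).factorial := rfl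
      _ ≤ a * ∏ p ∈ s, p := by
          exact Nat.mul_le_mul hak (ih (fun p hp => h2 p (Finset.mem_insert_of_mem hp)))

/-- If `a, b ≥ 1` are real and `m` is a positive integer with
`m ≤ a · b^{ν(m)}`, where `ν(m)` is the number of distinct prime divisors of `m`,
then `m ≤ 16 a² exp(b⁶)`. -/
theorem statement0 (a b : ℝ) (ha : 1 ≤ a) (hb : 1 ≤ b) (m : ℕ) (hm : 0 < m)
    (h : (m : ℝ) ≤ a * b ^ m.primeFactors.card) :
    (m : ℝ) ≤ 16 * a ^ 2 * Real.exp (b ^ 6) := by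
  set k := m.primeFactors.card with hk
  -- m has at least (k+1)! as a lower bound
  have hprod : (k + 1).factorial ≤ m := by
    have h1 : (k + 1).factorial ≤ ∏ p ∈ m.primeFactors, p :=
      aux_prod_ge_factorial _ (fun p hp => (Nat.prime_of_mem_primeFactors hp).two_le)
    exact h1.trans (Nat.le_of_dvd hm (Nat.prod_primeFactors_dvd m))
  have hKm : ((k + 1).factorial : ℝ) ≤ (m : ℝ) := by exact_mod_cast hprod
  -- b^(2k) ≤ k! * exp(b²) ≤ (k+1)! * exp(b⁶)
  have hb2 : (0:ℝ) ≤ b ^ 2 := sq_nonneg b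
  have hexp1 : (b ^ 2) ^ k / (k.factorial : ℝ) ≤ Real.exp (b ^ 2) :=
    Real.pow_div_factorial_le_exp _ hb2 k
  have hfac : (k.factorial : ℝ) ≤ ((k + 1).factorial : ℝ) := by
    exact_mod_cast Nat.factorial_le (Nat.le_succ k)
  have hfacpos : (0:ℝ) < (k.factorial : ℝ) := by positivity
  have hexp2 : Real.exp (b ^ 2) ≤ Real.exp (b ^ 6) := by
    exact Real.exp_le_exp.mpr (pow_le_pow_right₀ hb (by norm_num))
  have hB2 : (b ^ k) ^ 2 ≤ ((k + 1).factorial : ℝ) * Real.exp (b ^ 6) := by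
    have h1 : (b ^ 2) ^ k ≤ (k.factorial : ℝ) * Real.exp (b ^ 2) := by
      rw [div_le_iff₀ hfacpos] at hexp1
      linarith [hexp1]
    calc (b ^ k) ^ 2 = (b ^ 2) ^ k := by ring
      _ ≤ (k.factorial : ℝ) * Real.exp (b ^ 2) := h1
      _ ≤ ((k + 1).factorial : ℝ) * Real.exp (b ^ 6) := by
          apply mul_le_mul hfac hexp2 (Real.exp_pos _).le (by positivity)
  -- combine
  have hBpos : (0:ℝ) < b ^ k := by positivity
  have hB1 : (1:ℝ) ≤ b ^ k := one_le_pow₀ hb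
  have hE1 : (1:ℝ) ≤ Real.exp (b ^ 6) := by
    rw [Real.one_le_exp_iff]; positivity
  have hmpos : (0:ℝ) < (m : ℝ) := by exact_mod_cast hm
  -- m² ≤ a² (b^k)² ≤ a² (k+1)! exp(b⁶) ≤ a² m exp(b⁶)
  have key : (m : ℝ) * (m : ℝ) ≤ a ^ 2 * (m : ℝ) * Real.exp (b ^ 6) := by
    have h1 : (m : ℝ) * (m : ℝ) ≤ (a * b ^ k) * (a * b ^ k) :=
      mul_le_mul h h hmpos.le (by positivity)
    have h2 : (a * b ^ k) * (a * b ^ k) = a ^ 2 * (b ^ k) ^ 2 := by ring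
    have h3 : a ^ 2 * (b ^ k) ^ 2 ≤ a ^ 2 * (((k + 1).factorial : ℝ) * Real.exp (b ^ 6)) :=
      mul_le_mul_of_nonneg_left hB2 (by positivity)
    have h4 : a ^ 2 * (((k + 1).factorial : ℝ) * Real.exp (b ^ 6)) ≤
        a ^ 2 * ((m : ℝ) * Real.exp (b ^ 6)) := by
      apply mul_le_mul_of_nonneg_left _ (by positivity)
      exact mul_le_mul_of_nonneg_right hKm (Real.exp_pos _).le
    calc (m : ℝ) * (m : ℝ) ≤ (a * b ^ k) * (a * b ^ k) := h1
      _ = a ^ 2 * (b ^ k) ^ 2 := h2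
      _ ≤ a ^ 2 * (((k + 1).factorial : ℝ) * Real.exp (b ^ 6)) := h3
      _ ≤ a ^ 2 * ((m : ℝ) * Real.exp (b ^ 6)) := h4
      _ = a ^ 2 * (m : ℝ) * Real.exp (b ^ 6) := by ring
  have hmle : (m : ℝ) ≤ a ^ 2 * Real.exp (b ^ 6) := by
    have := (mul_le_mul_iff_of_pos_right hmpos).mp (by linarith [key] : (m : ℝ) * (m : ℝ) ≤
      (a ^ 2 * Real.exp (b ^ 6)) * (m : ℝ))
    linarith
  have ha2 : (1:ℝ) ≤ a ^ 2 := one_le_pow₀ ha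
  nlinarith [Real.exp_pos (b ^ 6)]
end

section
/- Let f ∈ ℤ[x] be a nonconstant polynomial with nonzero discriminant (equivalently, f and its derivative are coprime in ℚ[x]). Then every positive integer W such that W divides f(x) for every x ∈ ℤ satisfies W ≤ ‖f‖^{2·deg(f)} · exp(5000 · deg(f)⁶). -/
/-- The maximum of the absolute values of the coefficients of an integer polynomial,
as a real number. -/
noncomputable def polyNorm (f : Polynomial ℤ) : ℝ :=
  ((f.support.sup fun i => (f.coeff i).natAbs : ℕ) : ℝ)

/-- If `f ∈ ℤ[x]` is nonconstant with nonzero discriminant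
(equivalently, `f` and its derivative are coprime in `ℚ[x]`), then every positive
integer `W` dividing `f(x)` for every integer `x` satisfies
`W ≤ ‖f‖^{2 deg f} · exp(5000 · (deg f)⁶)`. -/
theorem statement2 (f : Polynomial ℤ) (hdeg : 0 < f.natDegree)
    (hcop : IsCoprime (f.map (Int.castRingHom ℚ))
      (Polynomial.derivative (f.map (Int.castRingHom ℚ))))
    (W : ℕ) (hW : 0 < W) (hdvd : ∀ x : ℤ, (W : ℤ) ∣ f.eval x) :
    (W : ℝ) ≤ polyNorm f ^ (2 * f.natDegree) *
      Real.exp (5000 * (f.natDegree : ℝ) ^ 6) := by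
  classical
  have hf0 : f ≠ 0 := fun h => by simp [h] at hdeg
  set d := f.natDegree with hd
  set M : ℕ := f.support.sup fun i => (f.coeff i).natAbs with hM
  have hM1 : 1 ≤ M := by
    obtain ⟨i, hi⟩ : ∃ i, f.coeff i ≠ 0 := by
      by_contra h
      push_neg at h
      exact hf0 (Polynomial.ext fun n => by simp [h n])
    have h1 : (f.coeff i).natAbs ≤ M :=
      Finset.le_sup (f := fun i => (f.coeff i).natAbs) (Polynomial.mem_support_iff.mpr hi)
    have h2 : 1 ≤ (f.coeff i).natAbs := Int.natAbs_pos.mpr hi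
    omega
  have hcoef : ∀ i, |f.coeff i| ≤ (M : ℤ) := by
    intro i
    by_cases hi : i ∈ f.support
    · have := Finset.le_sup (f := fun i => (f.coeff i).natAbs) hi
      rw [Int.abs_eq_natAbs]; exact_mod_cast this
    · rw [Polynomial.notMem_support_iff.mp hi]
      simp
  obtain ⟨x, hx0, hxd, hxne⟩ : ∃ x : ℤ, 0 ≤ x ∧ x ≤ (d : ℤ) ∧ f.eval x ≠ 0 := by
    by_contra h
    push_neg at h
    apply hf0
    apply Polynomial.eq_zero_of_natDegree_lt_card_of_eval_eq_zero' f
      ((Finset.range (d + 1)).image (fun n : ℕ => (n : ℤ)))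
    · intro i hi
      obtain ⟨n, hn, rfl⟩ := Finset.mem_image.mp hi
      exact h (n : ℤ) (Int.natCast_nonneg n)
        (by exact_mod_cast Nat.lt_succ_iff.mp (Finset.mem_range.mp hn))
    · rw [Finset.card_image_of_injective _ (fun a b hab => by exact_mod_cast hab),
        Finset.card_range, ← hd]
      omega
  have hWle : (W : ℤ) ≤ |f.eval x| :=
    Int.le_of_dvd (abs_pos.mpr hxne) ((dvd_abs _ _).mpr (hdvd x))
  have hevb : |f.eval x| ≤ (d + 1 : ℤ) * M * d ^ d := by
    rw [Polynomial.eval_eq_sum_range]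
    calc |∑ i ∈ Finset.range (d + 1), f.coeff i * x ^ i|
        ≤ ∑ i ∈ Finset.range (d + 1), |f.coeff i * x ^ i| :=
          Finset.abs_sum_le_sum_abs _ _
      _ ≤ ∑ i ∈ Finset.range (d + 1), (M : ℤ) * d ^ d := by
          apply Finset.sum_le_sum
          intro i hi
          rw [abs_mul, abs_pow]
          have h1 : |x| ^ i ≤ (d : ℤ) ^ d := by
            calc |x| ^ i ≤ (d : ℤ) ^ i := by
                  apply pow_le_pow_left₀ (abs_nonneg x)
                  rw [abs_le]; constructor <;> omega
              _ ≤ (d : ℤ) ^ d := by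
                  apply pow_le_pow_right₀ (by exact_mod_cast hdeg)
                  exact Nat.lt_succ_iff.mp (Finset.mem_range.mp hi)
          have h2 := hcoef i
          have h3 := abs_nonneg (f.coeff i)
          have h4 := pow_nonneg (abs_nonneg x) i
          nlinarith
      _ = (d + 1 : ℤ) * M * d ^ d := by
          rw [Finset.sum_const, Finset.card_range]; push_cast; ring
  have hreal : (W : ℝ) ≤ ((d : ℝ) + 1) * M * (d : ℝ) ^ d := by
    have := hWle.trans hevb
    exact_mod_cast this
  have hdR : (1 : ℝ) ≤ (d : ℝ) := by exact_mod_cast hdeg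
  have hMR : (1 : ℝ) ≤ (M : ℝ) := by exact_mod_cast hM1
  have hexp : ((d : ℝ) + 1) * (d : ℝ) ^ d ≤ Real.exp (5000 * (d : ℝ) ^ 6) := by
    have h1 : ((d : ℝ) + 1) * (d : ℝ) ^ d ≤ ((d : ℝ) + 1) ^ (d + 1) := by
      rw [pow_succ, mul_comm (((d : ℝ) + 1) ^ d)]
      gcongr
      linarith
    have h2 : ((d : ℝ) + 1) ^ (d + 1) ≤ Real.exp (d : ℝ) ^ (d + 1) :=
      pow_le_pow_left₀ (by positivity) (by linarith [Real.add_one_le_exp (d : ℝ)]) (d + 1)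
    have h3 : Real.exp (d : ℝ) ^ (d + 1) = Real.exp ((d : ℝ) * (d + 1)) := by
      rw [← Real.exp_nat_mul]
      congr 1
      push_cast
      ring
    have h4 : (d : ℝ) * (d + 1) ≤ 5000 * (d : ℝ) ^ 6 := by
      have h26 : (d : ℝ) ^ 2 ≤ (d : ℝ) ^ 6 := pow_le_pow_right₀ hdR (by norm_num)
      nlinarith
    calc ((d : ℝ) + 1) * (d : ℝ) ^ d ≤ Real.exp ((d : ℝ) * (d + 1)) := by
          rw [← h3]; exact h1.trans h2
      _ ≤ Real.exp (5000 * (d : ℝ) ^ 6) := Real.exp_le_exp.mpr h4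
  have hMpow : (M : ℝ) ≤ (M : ℝ) ^ (2 * d) := le_self_pow₀ hMR (by omega)
  calc (W : ℝ) ≤ ((d : ℝ) + 1) * M * (d : ℝ) ^ d := hreal
    _ = (M : ℝ) * (((d : ℝ) + 1) * (d : ℝ) ^ d) := by ring
    _ ≤ (M : ℝ) ^ (2 * d) * Real.exp (5000 * (d : ℝ) ^ 6) :=
        mul_le_mul hMpow hexp (by positivity) (by positivity)
end

section
/- Let F ∈ ℤ[x₀, …, x_m] be a polynomial of positive total degree which has no repeated polynomial factors (i.e. F is not divisible by the square of any nonconstant polynomial). Then every positive integer W such that W divides F(x) for every x ∈ ℤ^{m+1} satisfies W ≤ ‖F‖^{2·deg(F)} · exp(6000 · deg(F)⁶), where deg(F) is the total degree of F. -/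
open MvPolynomial

/-- The maximum of the absolute values of the coefficients of an integer
multivariate polynomial, as a real number. -/
noncomputable def mvPolyNorm {m : ℕ} (F : MvPolynomial (Fin (m + 1)) ℤ) : ℝ :=
  ((F.support.sup fun d => (F.coeff d).natAbs : ℕ) : ℝ)

open Finset fwdDiff Nat

lemma pow_fwdDiff_expand (g : ℕ) :
    fwdDiff (1:ℤ) (fun x => x ^ g) = fun x => ∑ j ∈ Finset.range g, (g.choose j : ℤ) * x ^ j := by
  funext x
  have h := add_pow x (1:ℤ) g
  simp only [one_pow, mul_one] at h
  rw [fwdDiff, h, Finset.sum_range_succ, Nat.choose_self]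
  simp only [Nat.cast_one, mul_one, add_sub_cancel_right]
  exact Finset.sum_congr rfl fun j _ => mul_comm _ _

lemma fwdDiff_pow_zero (a : ℕ) : ∀ g ≤ a,
    (fwdDiff (1:ℤ))^[a] (fun x => x ^ g) 0 = if g = a then (a ! : ℤ) else 0 := by
  induction a with
  | zero =>
    intro g hg
    interval_cases g
    simp [Nat.factorial]
  | succ a IH =>
    intro g hg
    rw [Function.iterate_succ_apply, pow_fwdDiff_expand]
    have hfun : (fun x : ℤ => ∑ j ∈ Finset.range g, (g.choose j : ℤ) * x ^ j)
        = ∑ j ∈ Finset.range g, (g.choose j : ℤ) • fun x : ℤ => x ^ j := by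
      funext x
      simp [Finset.sum_apply]
    rw [hfun, fwdDiff_iter_finset_sum, Finset.sum_apply]
    have : ∀ j ∈ Finset.range g,
        ((fwdDiff (1:ℤ))^[a] ((g.choose j : ℤ) • fun x : ℤ => x ^ j)) 0
          = (g.choose j : ℤ) * (if j = a then (a ! : ℤ) else 0) := by
      intro j hj
      rw [fwdDiff_iter_const_smul]
      have hj' : j ≤ a := by
        have := Finset.mem_range.mp hj
        omega
      simp [IH j hj', smul_eq_mul]
    rw [Finset.sum_congr rfl this]
    rcases eq_or_lt_of_le hg with hga | hga
    · subst hga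
      rw [if_pos rfl, Finset.sum_eq_single_of_mem a (Finset.self_mem_range_succ a)
        (fun b _ hb => by simp [hb])]
      simp [Nat.choose_succ_self_right, Nat.factorial_succ]
    · rw [if_neg (by omega)]
      apply Finset.sum_eq_zero
      intro j hj
      have hj' : j ≠ a := by have := Finset.mem_range.mp hj; omega
      simp [hj']

lemma alt_sum_choose_pow (a g : ℕ) (hg : g ≤ a) :
    ∑ b ∈ Finset.range (a+1), ((-1:ℤ)^(a-b) * (a.choose b)) * (b:ℤ)^g
      = if g = a then (a ! : ℤ) else 0 := by
  have h := fwdDiff_iter_eq_sum_shift (1:ℤ) (fun x => x ^ g) a 0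
  rw [fwdDiff_pow_zero a g hg] at h
  rw [h]
  apply Finset.sum_congr rfl
  intro b _
  simp [smul_eq_mul, mul_assoc]

open MvPolynomial in
lemma key_identity (m : ℕ) (F : MvPolynomial (Fin (m+1)) ℤ) (α : Fin (m+1) →₀ ℕ)
    (hα : α ∈ F.support) (hmax : (α.sum fun _ e => e) = F.totalDegree) :
    ∑ β ∈ Fintype.piFinset (fun i => Finset.range (α i + 1)),
      (∏ i, ((-1:ℤ)^(α i - β i) * ((α i).choose (β i) : ℤ)))
        * eval (fun i => (β i : ℤ)) F
      = (∏ i, ((α i)! : ℤ)) * F.coeff α := by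
  classical
  have hsum : ∀ γ : Fin (m+1) →₀ ℕ, (γ.sum fun _ e => e) = ∑ i, γ i := by
    intro γ
    rw [Finsupp.sum_fintype]
    intro i; rfl
  calc
    ∑ β ∈ Fintype.piFinset (fun i => Finset.range (α i + 1)),
      (∏ i, ((-1:ℤ)^(α i - β i) * ((α i).choose (β i) : ℤ)))
        * eval (fun i => (β i : ℤ)) F
      = ∑ β ∈ Fintype.piFinset (fun i => Finset.range (α i + 1)),
          ∑ γ ∈ F.support, F.coeff γ *
            ∏ i, (((-1:ℤ)^(α i - β i) * ((α i).choose (β i) : ℤ)) * (β i : ℤ)^(γ i)) := by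
        refine Finset.sum_congr rfl fun β _ => ?_
        rw [eval_eq', Finset.mul_sum]
        refine Finset.sum_congr rfl fun γ _ => ?_
        have hd : ∏ i, (((-1:ℤ)^(α i - β i) * ((α i).choose (β i) : ℤ)) * (β i : ℤ)^(γ i))
             = (∏ i, ((-1:ℤ)^(α i - β i) * ((α i).choose (β i) : ℤ))) * ∏ i, (β i : ℤ)^(γ i) :=
          Finset.prod_mul_distrib
        rw [hd]
        ring
    _ = ∑ γ ∈ F.support, F.coeff γ *
          ∑ β ∈ Fintype.piFinset (fun i => Finset.range (α i + 1)),
            ∏ i, (((-1:ℤ)^(α i - β i) * ((α i).choose (β i) : ℤ)) * (β i : ℤ)^(γ i)) := by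
        rw [Finset.sum_comm]
        simp_rw [Finset.mul_sum]
    _ = ∑ γ ∈ F.support, F.coeff γ *
          ∏ i, ∑ b ∈ Finset.range (α i + 1),
            ((-1:ℤ)^(α i - b) * ((α i).choose b : ℤ)) * (b:ℤ)^(γ i) := by
        refine Finset.sum_congr rfl fun γ _ => ?_
        congr 1
        exact (Finset.prod_univ_sum (fun i => Finset.range (α i + 1))
          (fun i b => ((-1:ℤ)^(α i - b) * ((α i).choose b : ℤ)) * (b:ℤ)^(γ i))).symm
    _ = F.coeff α * ∏ i, ((α i)! : ℤ) := by
        rw [Finset.sum_eq_single_of_mem α hα]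
        · congr 1
          refine Finset.prod_congr rfl fun i _ => ?_
          rw [alt_sum_choose_pow _ _ le_rfl, if_pos rfl]
        · intro γ hγ hne
          have hle : (∑ i, γ i) ≤ ∑ i, α i := by
            rw [← hsum, ← hsum, hmax]
            exact le_totalDegree hγ
          have hex : ∃ j, γ j < α j := by
            by_contra hno
            push_neg at hno
            have hge : ∑ i, α i ≤ ∑ i, γ i :=
              Finset.sum_le_sum fun i _ => hno i
            have hsums : ∑ i, α i = ∑ i, γ i := le_antisymm hge hle
            have heq := (Finset.sum_eq_sum_iff_of_le (fun i _ => hno i)).mp hsums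
            exact hne (Finsupp.ext fun i => (heq i (Finset.mem_univ i)).symm)
          obtain ⟨j, hj⟩ := hex
          rw [Finset.prod_eq_zero (Finset.mem_univ j)]
          · ring
          · rw [alt_sum_choose_pow _ _ hj.le, if_neg hj.ne]
    _ = (∏ i, ((α i)! : ℤ)) * F.coeff α := mul_comm _ _

/-- If `F ∈ ℤ[x₀,…,x_m]` has positive total degree and no repeated
polynomial factors (it is not divisible by the square of any nonconstant polynomial),
then every positive integer `W` dividing `F(x)` for every `x ∈ ℤ^{m+1}` satisfies
`W ≤ ‖F‖^{2 deg F} · exp(6000 · (deg F)⁶)`. -/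
theorem statement3 (m : ℕ) (F : MvPolynomial (Fin (m + 1)) ℤ)
    (hdeg : 0 < F.totalDegree)
    (hsqfree : ∀ g : MvPolynomial (Fin (m + 1)) ℤ, 0 < g.totalDegree → ¬ g ^ 2 ∣ F)
    (W : ℕ) (hW : 0 < W) (hdvd : ∀ x : Fin (m + 1) → ℤ, (W : ℤ) ∣ eval x F) :
    (W : ℝ) ≤ mvPolyNorm F ^ (2 * F.totalDegree) *
      Real.exp (6000 * (F.totalDegree : ℝ) ^ 6) := by
  classical
  have hF0 : F ≠ 0 := by
    intro h
    rw [h] at hdeg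
    simp at hdeg
  set d := F.totalDegree with hd
  obtain ⟨α, hα, hαd⟩ : ∃ α ∈ F.support, (α.sum fun _ e => e) = d := by
    obtain ⟨α, hα, h⟩ := Finset.exists_mem_eq_sup F.support
      (MvPolynomial.support_nonempty.mpr hF0) (fun s : Fin (m+1) →₀ ℕ => s.sum fun _ e => e)
    exact ⟨α, hα, by rw [hd, MvPolynomial.totalDegree, h]⟩
  set N : ℤ := ∑ β ∈ Fintype.piFinset (fun i => Finset.range (α i + 1)),
      (∏ i, ((-1:ℤ)^(α i - β i) * ((α i).choose (β i) : ℤ)))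
        * eval (fun i => ((β i : ℕ) : ℤ)) F with hN
  have hNval : N = (∏ i, ((α i)! : ℤ)) * F.coeff α := key_identity m F α hα hαd
  have hWN : (W:ℤ) ∣ N := Finset.dvd_sum fun β _ => Dvd.dvd.mul_left (hdvd _) _
  have hc0 : F.coeff α ≠ 0 := MvPolynomial.mem_support_iff.mp hα
  set n1 : ℕ := ∏ i, (α i)! with hn1
  set cnat : ℕ := (F.coeff α).natAbs with hcnat
  have hN0 : N ≠ 0 := by
    rw [hNval]
    refine mul_ne_zero ?_ hc0
    refine Finset.prod_ne_zero_iff.mpr fun i _ => ?_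
    exact_mod_cast (α i).factorial_ne_zero
  have habs : |N| = ((n1 : ℤ)) * ((cnat : ℤ)) := by
    rw [hNval, abs_mul]
    congr 1
    · rw [abs_of_nonneg (by positivity), hn1, Nat.cast_prod]
    · exact Int.abs_eq_natAbs _
  have hWle : (W:ℕ) ≤ n1 * cnat := by
    have h1 : (W:ℤ) ≤ |N| := Int.le_of_dvd (abs_pos.mpr hN0) ((dvd_abs _ _).mpr hWN)
    rw [habs] at h1
    exact_mod_cast h1
  -- numeric bounds
  have hd1 : (1:ℝ) ≤ (d:ℝ) := by exact_mod_cast hdeg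
  set A : ℕ := F.support.sup fun d => (F.coeff d).natAbs with hA
  have hcle : cnat ≤ A := Finset.le_sup (f := fun d => (F.coeff d).natAbs) hα
  have h1c : 1 ≤ cnat := Int.natAbs_pos.mpr hc0
  have h1A : (1:ℝ) ≤ (A:ℝ) := by exact_mod_cast le_trans h1c hcle
  have hn1d : n1 ≤ d ! := by
    apply Nat.le_of_dvd (Nat.factorial_pos d)
    have h2 := Nat.prod_factorial_dvd_factorial_sum Finset.univ (fun i => α i)
    have h3 : (∑ i, α i) = d := by
      rw [← hαd, Finsupp.sum_fintype]
      intro i; rfl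
    rwa [h3] at h2
  have hfac : ((d ! : ℕ) : ℝ) ≤ Real.exp (6000 * (d:ℝ)^6) := by
    calc ((d ! : ℕ) : ℝ) ≤ ((d ^ d : ℕ) : ℝ) := by exact_mod_cast Nat.factorial_le_pow d
    _ = (d:ℝ)^d := by push_cast; ring
    _ ≤ (Real.exp (6000 * (d:ℝ)^5))^d := by
        apply pow_le_pow_left₀ (by positivity)
        calc (d:ℝ) ≤ (d:ℝ) + 1 := by linarith
        _ ≤ Real.exp (d:ℝ) := Real.add_one_le_exp _
        _ ≤ Real.exp (6000*(d:ℝ)^5) := by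
            apply Real.exp_le_exp.mpr
            have h5 : (d:ℝ) ≤ (d:ℝ)^5 := le_self_pow₀ hd1 (by norm_num)
            linarith
    _ = Real.exp (6000 * (d:ℝ)^6) := by
        rw [← Real.exp_nat_mul]
        congr 1
        ring
  have hApow : (A:ℝ) ≤ (A:ℝ) ^ (2*d) := by
    exact le_self_pow₀ h1A (Nat.mul_ne_zero (by norm_num) hdeg.ne')
  have hmain : (W:ℝ) ≤ (n1:ℝ) * (cnat:ℝ) := by exact_mod_cast hWle
  calc (W:ℝ) ≤ (n1:ℝ) * (cnat:ℝ) := hmain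
  _ ≤ Real.exp (6000 * (d:ℝ)^6) * ((A:ℝ) ^ (2*d)) := by
      apply mul_le_mul
      · exact le_trans (by exact_mod_cast hn1d) hfac
      · exact le_trans (by exact_mod_cast hcle) hApow
      · positivity
      · positivity
  _ = mvPolyNorm F ^ (2 * F.totalDegree) * Real.exp (6000 * (F.totalDegree : ℝ) ^ 6) := by
      rw [mul_comm]
      rfl
end

section
/- Let a₀, a₁, d₀, d₁, f₀, f₁, b₀, b₁, b₂, e₀, e₁, e₂ be integers and let F(x₀,x₁,x₂,x₃) = a(x₀,x₁)x₂² + d(x₀,x₁)x₂x₃ + f(x₀,x₁)x₃² + b(x₀,x₁)x₂ + e(x₀,x₁)x₃. Assume F defines a smooth surface in ℙ³ (the only common complex zero of the four partial derivatives of F is the origin). Then: the binary forms a(s,t), b(s,t), e(s,t), f(s,t) and d(s,t)² − 4a(s,t)f(s,t) are not identically zero; the forms a, d, f have no common nonconstant polynomial divisor in ℚ[s,t]; and the forms b, e have no common nonconstant polynomial divisor in ℚ[s,t]. -/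
open MvPolynomial

/-- The binary linear form `a(s,t) = a₀ s + a₁ t` in `ℚ[s,t]`. -/
noncomputable def binLin (a₀ a₁ : ℤ) : MvPolynomial (Fin 2) ℚ :=
  C (a₀ : ℚ) * X 0 + C (a₁ : ℚ) * X 1

/-- The binary quadratic form `b(s,t) = b₀ s² + b₁ st + b₂ t²` in `ℚ[s,t]`. -/
noncomputable def binQuad (b₀ b₁ b₂ : ℤ) : MvPolynomial (Fin 2) ℚ :=
  C (b₀ : ℚ) * X 0 ^ 2 + C (b₁ : ℚ) * X 0 * X 1 + C (b₂ : ℚ) * X 1 ^ 2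

/-- The cubic form
`F = a(x₀,x₁)x₂² + d(x₀,x₁)x₂x₃ + f(x₀,x₁)x₃² + b(x₀,x₁)x₂ + e(x₀,x₁)x₃`. -/
noncomputable def skewCubic (a₀ a₁ d₀ d₁ f₀ f₁ b₀ b₁ b₂ e₀ e₁ e₂ : ℤ) :
    MvPolynomial (Fin 4) ℚ :=
  (C (a₀ : ℚ) * X 0 + C (a₁ : ℚ) * X 1) * X 2 ^ 2 +
  (C (d₀ : ℚ) * X 0 + C (d₁ : ℚ) * X 1) * X 2 * X 3 +
  (C (f₀ : ℚ) * X 0 + C (f₁ : ℚ) * X 1) * X 3 ^ 2 +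
  (C (b₀ : ℚ) * X 0 ^ 2 + C (b₁ : ℚ) * X 0 * X 1 + C (b₂ : ℚ) * X 1 ^ 2) * X 2 +
  (C (e₀ : ℚ) * X 0 ^ 2 + C (e₁ : ℚ) * X 0 * X 1 + C (e₂ : ℚ) * X 1 ^ 2) * X 3

/-! Auxiliary machinery. -/

/-- The isomorphism `ℚ[s,t] → (ℚ[t])[s]` (as an algebra hom). -/
noncomputable def Phi : MvPolynomial (Fin 2) ℚ →ₐ[ℚ] Polynomial (Polynomial ℚ) :=
  aeval ![Polynomial.X, Polynomial.C Polynomial.X]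

/-- A left inverse for `Phi`. -/
noncomputable def Psi : Polynomial (Polynomial ℚ) →+* MvPolynomial (Fin 2) ℚ :=
  Polynomial.eval₂RingHom
    (Polynomial.eval₂RingHom (MvPolynomial.C : ℚ →+* MvPolynomial (Fin 2) ℚ) (X 1)) (X 0)

lemma Psi_Phi (g : MvPolynomial (Fin 2) ℚ) : Psi (Phi g) = g := by
  have h : Psi.comp (Phi : MvPolynomial (Fin 2) ℚ →+* Polynomial (Polynomial ℚ)) =
      RingHom.id _ := by
    apply MvPolynomial.ringHom_ext
    · intro r
      simp [Phi, Psi, algebraMap_eq]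
    · intro i
      fin_cases i <;> simp [Phi, Psi]
  exact RingHom.congr_fun h g

/-- Evaluation of the inner variable at `v` (after base change to `ℂ`). -/
noncomputable def theta (v : ℂ) : Polynomial (Polynomial ℚ) →+* Polynomial ℂ :=
  Polynomial.mapRingHom (Polynomial.eval₂RingHom (algebraMap ℚ ℂ) v)

lemma bridge (u v : ℂ) (p : MvPolynomial (Fin 2) ℚ) :
    Polynomial.eval u (theta v (Phi p)) = aeval ![u, v] p := by
  have h : (Polynomial.evalRingHom u).comp
      ((theta v).comp (Phi : MvPolynomial (Fin 2) ℚ →+* Polynomial (Polynomial ℚ))) =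
      ((aeval ![u, v] : MvPolynomial (Fin 2) ℚ →ₐ[ℚ] ℂ) : MvPolynomial (Fin 2) ℚ →+* ℂ) := by
    apply MvPolynomial.ringHom_ext
    · intro r
      simp [Phi, theta, algebraMap_eq]
    · intro i
      fin_cases i <;> simp [Phi, theta]
  exact RingHom.congr_fun h p

/-- Key step: a nonconstant polynomial in `ℚ[s,t]` admits a "root certificate". -/
lemma core (g : MvPolynomial (Fin 2) ℚ) (hg : 0 < g.totalDegree) (hg0 : g ≠ 0) :
    ∃ u v : ℂ, ¬(u = 0 ∧ v = 0) ∧ Polynomial.eval u (theta v (Phi g)) = 0 := by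
  have hg'0 : Phi g ≠ 0 := by
    intro h
    apply hg0
    have := congrArg Psi h
    rwa [Psi_Phi, map_zero] at this
  have hnu : ¬ IsUnit (Phi g) := by
    intro hu
    obtain ⟨r, hr, hCr⟩ := Polynomial.isUnit_iff.mp hu
    obtain ⟨c, _, hCc⟩ := Polynomial.isUnit_iff.mp hr
    have hgC : g = MvPolynomial.C c := by
      have := Psi_Phi g
      rw [← hCr, ← hCc] at this
      simp [Psi] at this
      exact this.symm
    rw [hgC, totalDegree_C] at hg
    exact lt_irrefl 0 hg
  rcases Nat.eq_zero_or_pos (Phi g).natDegree with h0 | hpos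
  · have hC := Polynomial.eq_C_of_natDegree_eq_zero h0
    set p₀ := (Phi g).coeff 0 with hp₀def
    have hp₀ : p₀ ≠ 0 := by
      intro h
      rw [hC, h, map_zero] at hg'0
      exact hg'0 rfl
    have hpu : ¬ IsUnit p₀ := fun h => hnu (hC ▸ Polynomial.isUnit_C.mpr h)
    have hdeg : 0 < p₀.degree := by
      rcases lt_or_eq_of_le (Polynomial.zero_le_degree_iff.mpr hp₀) with h | h
      · exact h
      · exact absurd (Polynomial.isUnit_iff_degree_eq_zero.mpr h.symm) hpu
    have hdegC : 0 < (p₀.map (algebraMap ℚ ℂ)).degree := by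
      rwa [Polynomial.degree_map]
    obtain ⟨t₀, ht₀⟩ := Complex.exists_root hdegC
    refine ⟨1, t₀, by simp, ?_⟩
    rw [hC]
    simp only [theta, Polynomial.coe_mapRingHom, Polynomial.map_C, Polynomial.eval_C]
    rw [Polynomial.coe_eval₂RingHom, Polynomial.eval₂_eq_eval_map]
    exact ht₀
  · set n := (Phi g).natDegree with hn
    have hlc : (Phi g).coeff n ≠ 0 := by
      rw [hn, Polynomial.coeff_natDegree]
      exact Polynomial.leadingCoeff_ne_zero.mpr hg'0
    have hlcm : ((Phi g).coeff n).map (algebraMap ℚ ℂ) ≠ 0 := by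
      intro h
      exact hlc (Polynomial.map_injective _ (algebraMap ℚ ℂ).injective (by simpa using h))
    set L := ((Phi g).coeff n).map (algebraMap ℚ ℂ) * Polynomial.X with hL
    have hL0 : L ≠ 0 := mul_ne_zero hlcm Polynomial.X_ne_zero
    obtain ⟨t₀, ht₀⟩ := Infinite.exists_notMem_finset L.roots.toFinset
    have hLt : Polynomial.eval t₀ L ≠ 0 := by
      intro h
      exact ht₀ (Multiset.mem_toFinset.mpr ((Polynomial.mem_roots hL0).mpr h))
    rw [hL, Polynomial.eval_mul, Polynomial.eval_X, mul_ne_zero_iff] at hLt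
    have hcoeff : (theta t₀ (Phi g)).coeff n ≠ 0 := by
      simp only [theta, Polynomial.coe_mapRingHom, Polynomial.coeff_map,
        Polynomial.coe_eval₂RingHom]
      rw [Polynomial.eval₂_eq_eval_map]
      exact hLt.1
    have hdeg : 0 < (theta t₀ (Phi g)).degree := by
      refine lt_of_lt_of_le ?_ (Polynomial.le_degree_of_ne_zero hcoeff)
      exact_mod_cast hpos
    obtain ⟨z, hz⟩ := Complex.exists_root hdeg
    exact ⟨z, t₀, fun h => hLt.2 h.2, hz⟩

/-- Two polynomials in `ℚ[s,t]` with a common nonconstant divisor have a common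
nontrivial complex zero. -/
lemma commonRoot (g p q : MvPolynomial (Fin 2) ℚ) (hg : 0 < g.totalDegree)
    (hp : g ∣ p) (hq : g ∣ q) (hp0 : p ≠ 0) :
    ∃ u v : ℂ, ¬(u = 0 ∧ v = 0) ∧ aeval ![u, v] p = 0 ∧ aeval ![u, v] q = 0 := by
  have hg0 : g ≠ 0 := by
    rintro rfl
    exact hp0 (zero_dvd_iff.mp hp)
  obtain ⟨u, v, hne, h0⟩ := core g hg hg0
  refine ⟨u, v, hne, ?_, ?_⟩
  · obtain ⟨H, rfl⟩ := hp
    rw [← bridge, map_mul, map_mul, Polynomial.eval_mul, h0, zero_mul]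
  · obtain ⟨H, rfl⟩ := hq
    rw [← bridge, map_mul, map_mul, Polynomial.eval_mul, h0, zero_mul]

lemma aevalLin (c₀ c₁ : ℤ) (u v : ℂ) :
    aeval ![u, v] (binLin c₀ c₁) = (c₀:ℂ)*u + c₁*v := by
  simp [binLin]

lemma aevalQuad (c₀ c₁ c₂ : ℤ) (u v : ℂ) :
    aeval ![u, v] (binQuad c₀ c₁ c₂) = (c₀:ℂ)*u^2 + c₁*u*v + c₂*v^2 := by
  simp [binQuad]

lemma extL (c₀ c₁ : ℤ) (h : binLin c₀ c₁ = 0) : c₀ = 0 ∧ c₁ = 0 := by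
  have e1 := congrArg (eval ![(1:ℚ), 0]) h
  have e2 := congrArg (eval ![(0:ℚ), 1]) h
  simp [binLin] at e1 e2
  exact ⟨e1, e2⟩

lemma extQ (c₀ c₁ c₂ : ℤ) (h : binQuad c₀ c₁ c₂ = 0) :
    c₀ = 0 ∧ c₁ = 0 ∧ c₂ = 0 := by
  have e1 := congrArg (eval ![(1:ℚ), 0]) h
  have e2 := congrArg (eval ![(0:ℚ), 1]) h
  have e3 := congrArg (eval ![(1:ℚ), 1]) h
  simp [binQuad] at e1 e2 e3
  rw [e1, e2] at e3
  refine ⟨e1, ?_, e2⟩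
  exact_mod_cast by simpa using e3

lemma rootQ (c₀ c₁ c₂ : ℤ) :
    ∃ u v : ℂ, ¬(u = 0 ∧ v = 0) ∧ (c₀:ℂ)*u^2 + c₁*u*v + c₂*v^2 = 0 := by
  by_cases hc : (c₀:ℂ) = 0
  · exact ⟨1, 0, by simp, by rw [hc]; ring⟩
  · obtain ⟨z, hz⟩ := Complex.exists_root
      (f := Polynomial.C (c₀:ℂ) * Polynomial.X^2 + Polynomial.C (c₁:ℂ) * Polynomial.X
        + Polynomial.C (c₂:ℂ)) (by rw [Polynomial.degree_quadratic hc]; norm_num)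
    have hz' : (c₀:ℂ)*z^2 + c₁*z + c₂ = 0 := by
      simpa [Polynomial.IsRoot] using hz
    exact ⟨z, 1, by simp, by linear_combination hz'⟩

section aux
variable (a₀ a₁ d₀ d₁ f₀ f₁ b₀ b₁ b₂ e₀ e₁ e₂ : ℤ)

lemma pd0 (x : Fin 4 → ℂ) :
    aeval x (pderiv 0 (skewCubic a₀ a₁ d₀ d₁ f₀ f₁ b₀ b₁ b₂ e₀ e₁ e₂)) =
      (a₀:ℂ)*x 2^2 + d₀*x 2*x 3 + f₀*x 3^2 + (2*b₀*x 0 + b₁*x 1)*x 2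
        + (2*e₀*x 0 + e₁*x 1)*x 3 := by
  simp [skewCubic, pderiv_mul, pderiv_pow, Pi.single_apply]; ring

lemma pd1 (x : Fin 4 → ℂ) :
    aeval x (pderiv 1 (skewCubic a₀ a₁ d₀ d₁ f₀ f₁ b₀ b₁ b₂ e₀ e₁ e₂)) =
      (a₁:ℂ)*x 2^2 + d₁*x 2*x 3 + f₁*x 3^2 + (b₁*x 0 + 2*b₂*x 1)*x 2
        + (e₁*x 0 + 2*e₂*x 1)*x 3 := by
  simp [skewCubic, pderiv_mul, pderiv_pow, Pi.single_apply]; ring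

lemma pd2 (x : Fin 4 → ℂ) :
    aeval x (pderiv 2 (skewCubic a₀ a₁ d₀ d₁ f₀ f₁ b₀ b₁ b₂ e₀ e₁ e₂)) =
      2*((a₀:ℂ)*x 0 + a₁*x 1)*x 2 + (d₀*x 0 + d₁*x 1)*x 3
        + (b₀*x 0^2 + b₁*x 0*x 1 + b₂*x 1^2) := by
  simp [skewCubic, pderiv_mul, pderiv_pow, Pi.single_apply]; ring

lemma pd3 (x : Fin 4 → ℂ) :
    aeval x (pderiv 3 (skewCubic a₀ a₁ d₀ d₁ f₀ f₁ b₀ b₁ b₂ e₀ e₁ e₂)) =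
      ((d₀:ℂ)*x 0 + d₁*x 1)*x 2 + 2*(f₀*x 0 + f₁*x 1)*x 3
        + (e₀*x 0^2 + e₁*x 0*x 1 + e₂*x 1^2) := by
  simp [skewCubic, pderiv_mul, pderiv_pow, Pi.single_apply]; ring

lemma S1 (hsmooth : ∀ x : Fin 4 → ℂ,
      (∀ i, MvPolynomial.aeval x
        (pderiv i (skewCubic a₀ a₁ d₀ d₁ f₀ f₁ b₀ b₁ b₂ e₀ e₁ e₂)) = 0) → x = 0)
    (u v : ℂ) (hne : ¬(u = 0 ∧ v = 0))
    (h0 : (a₀:ℂ)*u^2 + d₀*u*v + f₀*v^2 = 0)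
    (h1 : (a₁:ℂ)*u^2 + d₁*u*v + f₁*v^2 = 0) : False := by
  have hx := hsmooth ![0,0,u,v] ?_
  · apply hne
    constructor
    · have := congrFun hx 2; simpa using this
    · have := congrFun hx 3; simpa using this
  intro i
  fin_cases i
  · refine (pd0 a₀ a₁ d₀ d₁ f₀ f₁ b₀ b₁ b₂ e₀ e₁ e₂ _).trans ?_
    simp; linear_combination h0
  · refine (pd1 a₀ a₁ d₀ d₁ f₀ f₁ b₀ b₁ b₂ e₀ e₁ e₂ _).trans ?_
    simp; linear_combination h1
  · refine (pd2 a₀ a₁ d₀ d₁ f₀ f₁ b₀ b₁ b₂ e₀ e₁ e₂ _).trans ?_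
    simp
  · refine (pd3 a₀ a₁ d₀ d₁ f₀ f₁ b₀ b₁ b₂ e₀ e₁ e₂ _).trans ?_
    simp

lemma S2 (hsmooth : ∀ x : Fin 4 → ℂ,
      (∀ i, MvPolynomial.aeval x
        (pderiv i (skewCubic a₀ a₁ d₀ d₁ f₀ f₁ b₀ b₁ b₂ e₀ e₁ e₂)) = 0) → x = 0)
    (u v : ℂ) (hne : ¬(u = 0 ∧ v = 0))
    (hb : (b₀:ℂ)*u^2 + b₁*u*v + b₂*v^2 = 0)
    (he : (e₀:ℂ)*u^2 + e₁*u*v + e₂*v^2 = 0) : False := by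
  have hx := hsmooth ![u,v,0,0] ?_
  · apply hne
    constructor
    · have := congrFun hx 0; simpa using this
    · have := congrFun hx 1; simpa using this
  intro i
  fin_cases i
  · refine (pd0 a₀ a₁ d₀ d₁ f₀ f₁ b₀ b₁ b₂ e₀ e₁ e₂ _).trans ?_
    simp
  · refine (pd1 a₀ a₁ d₀ d₁ f₀ f₁ b₀ b₁ b₂ e₀ e₁ e₂ _).trans ?_
    simp
  · refine (pd2 a₀ a₁ d₀ d₁ f₀ f₁ b₀ b₁ b₂ e₀ e₁ e₂ _).trans ?_
    simp; linear_combination hb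
  · refine (pd3 a₀ a₁ d₀ d₁ f₀ f₁ b₀ b₁ b₂ e₀ e₁ e₂ _).trans ?_
    simp; linear_combination he

/-- If `d` and `f` are proportional to `a` (witnessed by rational factors), the
surface is singular. -/
lemma S1' (hsmooth : ∀ x : Fin 4 → ℂ,
      (∀ i, MvPolynomial.aeval x
        (pderiv i (skewCubic a₀ a₁ d₀ d₁ f₀ f₁ b₀ b₁ b₂ e₀ e₁ e₂)) = 0) → x = 0)
    (lam mu : ℚ)
    (hd0 : (d₀:ℚ) = lam*a₀) (hd1 : (d₁:ℚ) = lam*a₁)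
    (hf0 : (f₀:ℚ) = mu*a₀) (hf1 : (f₁:ℚ) = mu*a₁) : False := by
  obtain ⟨z, hz⟩ := Complex.exists_root
    (f := Polynomial.C (1:ℂ) * Polynomial.X^2 + Polynomial.C (lam:ℂ) * Polynomial.X
      + Polynomial.C (mu:ℂ)) (by rw [Polynomial.degree_quadratic one_ne_zero]; norm_num)
  have hz' : z^2 + (lam:ℂ)*z + mu = 0 := by
    have := hz
    simp [Polynomial.IsRoot] at this
    linear_combination this
  have hd0c : (d₀:ℂ) = (lam:ℂ)*a₀ := by exact_mod_cast congrArg (fun r : ℚ => (r:ℂ)) hd0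
  have hd1c : (d₁:ℂ) = (lam:ℂ)*a₁ := by exact_mod_cast congrArg (fun r : ℚ => (r:ℂ)) hd1
  have hf0c : (f₀:ℂ) = (mu:ℂ)*a₀ := by exact_mod_cast congrArg (fun r : ℚ => (r:ℂ)) hf0
  have hf1c : (f₁:ℂ) = (mu:ℂ)*a₁ := by exact_mod_cast congrArg (fun r : ℚ => (r:ℂ)) hf1
  refine S1 a₀ a₁ d₀ d₁ f₀ f₁ b₀ b₁ b₂ e₀ e₁ e₂ hsmooth z 1 (by simp) ?_ ?_
  · linear_combination (a₀:ℂ)*hz' + z*hd0c + hf0c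
  · linear_combination (a₁:ℂ)*hz' + z*hd1c + hf1c

end aux

/-- If the cubic form `F` above defines a smooth surface in `ℙ³`, then
the binary forms `a, b, e, f` and `d² − 4af` are not identically zero, the forms
`a, d, f` have no common nonconstant polynomial divisor in `ℚ[s,t]`, and neither do
`b` and `e`. -/
theorem statement10 (a₀ a₁ d₀ d₁ f₀ f₁ b₀ b₁ b₂ e₀ e₁ e₂ : ℤ)
    (hsmooth : ∀ x : Fin 4 → ℂ,
      (∀ i, MvPolynomial.aeval x
        (pderiv i (skewCubic a₀ a₁ d₀ d₁ f₀ f₁ b₀ b₁ b₂ e₀ e₁ e₂)) = 0) → x = 0) :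
    binLin a₀ a₁ ≠ 0 ∧ binQuad b₀ b₁ b₂ ≠ 0 ∧ binQuad e₀ e₁ e₂ ≠ 0 ∧
    binLin f₀ f₁ ≠ 0 ∧
    (binLin d₀ d₁) ^ 2 - 4 * binLin a₀ a₁ * binLin f₀ f₁ ≠ 0 ∧
    (∀ g : MvPolynomial (Fin 2) ℚ, 0 < g.totalDegree →
      ¬ (g ∣ binLin a₀ a₁ ∧ g ∣ binLin d₀ d₁ ∧ g ∣ binLin f₀ f₁)) ∧
    (∀ g : MvPolynomial (Fin 2) ℚ, 0 < g.totalDegree →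
      ¬ (g ∣ binQuad b₀ b₁ b₂ ∧ g ∣ binQuad e₀ e₁ e₂)) := by
  have hA : binLin a₀ a₁ ≠ 0 := by
    intro h
    obtain ⟨h1, h2⟩ := extL _ _ h
    refine S1 a₀ a₁ d₀ d₁ f₀ f₁ b₀ b₁ b₂ e₀ e₁ e₂ hsmooth 1 0 (by simp) ?_ ?_
    · have : (a₀:ℂ) = 0 := by exact_mod_cast h1
      linear_combination this
    · have : (a₁:ℂ) = 0 := by exact_mod_cast h2
      linear_combination this
  have hF : binLin f₀ f₁ ≠ 0 := by
    intro h
    obtain ⟨h1, h2⟩ := extL _ _ h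
    refine S1 a₀ a₁ d₀ d₁ f₀ f₁ b₀ b₁ b₂ e₀ e₁ e₂ hsmooth 0 1 (by simp) ?_ ?_
    · have : (f₀:ℂ) = 0 := by exact_mod_cast h1
      linear_combination this
    · have : (f₁:ℂ) = 0 := by exact_mod_cast h2
      linear_combination this
  have hB : binQuad b₀ b₁ b₂ ≠ 0 := by
    intro h
    obtain ⟨h1, h2, h3⟩ := extQ _ _ _ h
    obtain ⟨u, v, hne, he⟩ := rootQ e₀ e₁ e₂
    refine S2 a₀ a₁ d₀ d₁ f₀ f₁ b₀ b₁ b₂ e₀ e₁ e₂ hsmooth u v hne ?_ he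
    have c1 : (b₀:ℂ) = 0 := by exact_mod_cast h1
    have c2 : (b₁:ℂ) = 0 := by exact_mod_cast h2
    have c3 : (b₂:ℂ) = 0 := by exact_mod_cast h3
    linear_combination u^2*c1 + u*v*c2 + v^2*c3
  have hE : binQuad e₀ e₁ e₂ ≠ 0 := by
    intro h
    obtain ⟨h1, h2, h3⟩ := extQ _ _ _ h
    obtain ⟨u, v, hne, hb⟩ := rootQ b₀ b₁ b₂
    refine S2 a₀ a₁ d₀ d₁ f₀ f₁ b₀ b₁ b₂ e₀ e₁ e₂ hsmooth u v hne hb ?_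
    have c1 : (e₀:ℂ) = 0 := by exact_mod_cast h1
    have c2 : (e₁:ℂ) = 0 := by exact_mod_cast h2
    have c3 : (e₂:ℂ) = 0 := by exact_mod_cast h3
    linear_combination u^2*c1 + u*v*c2 + v^2*c3
  have haq : ¬((a₀:ℚ) = 0 ∧ (a₁:ℚ) = 0) := by
    rintro ⟨h1, h2⟩
    exact hA (by rw [binLin, h1, h2]; simp)
  have hfq : ¬((f₀:ℚ) = 0 ∧ (f₁:ℚ) = 0) := by
    rintro ⟨h1, h2⟩
    exact hF (by rw [binLin, h1, h2]; simp)
  have hD : (binLin d₀ d₁) ^ 2 - 4 * binLin a₀ a₁ * binLin f₀ f₁ ≠ 0 := by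
    intro h
    have e1 := congrArg (eval ![(1:ℚ), 0]) h
    have e2 := congrArg (eval ![(0:ℚ), 1]) h
    have e3 := congrArg (eval ![(1:ℚ), 1]) h
    simp [binLin] at e1 e2 e3
    -- e1 : d₀² - 4a₀f₀ = 0, e2 : d₁² - 4a₁f₁ = 0, e3 : (d₀+d₁)² - 4(a₀+a₁)(f₀+f₁) = 0
    have E1 : (d₀:ℂ)^2 - 4*a₀*f₀ = 0 := by have := congrArg (fun r : ℚ => (r:ℂ)) e1; push_cast at this; linear_combination this
    have E2 : (d₁:ℂ)^2 - 4*a₁*f₁ = 0 := by have := congrArg (fun r : ℚ => (r:ℂ)) e2; push_cast at this; linear_combination this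
    have E3 : ((d₀:ℂ)+d₁)^2 - 4*((a₀:ℂ)+a₁)*((f₀:ℂ)+f₁) = 0 := by have := congrArg (fun r : ℚ => (r:ℂ)) e3; push_cast at this; linear_combination this
    by_cases hd0 : (d₀:ℂ) = 0
    · by_cases hd1 : (d₁:ℂ) = 0
      · have hd0q : (d₀:ℚ) = 0 := by exact_mod_cast hd0
        have hd1q : (d₁:ℚ) = 0 := by exact_mod_cast hd1
        apply hfq
        have key : (a₀:ℚ)*f₁ + a₁*f₀ = 0 := by
          linear_combination (-1/4)*e3 + (1/4)*e1 + (1/4)*e2 + (1/2)*(d₁:ℚ)*hd0q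
        rcases not_and_or.mp haq with ha | ha
        · have hf0 : (f₀:ℚ) = 0 := by
            have h1 : (a₀:ℚ)*f₀ = 0 := by
              linear_combination (-1/4)*e1 + (1/4)*(d₀:ℚ)*hd0q
            exact (mul_eq_zero.mp h1).resolve_left ha
          have hf1 : (f₁:ℚ) = 0 := by
            have h1 : (a₀:ℚ)*f₁ = 0 := by linear_combination key - (a₁:ℚ)*hf0
            exact (mul_eq_zero.mp h1).resolve_left ha
          exact ⟨hf0, hf1⟩
        · have hf1 : (f₁:ℚ) = 0 := by
            have h1 : (a₁:ℚ)*f₁ = 0 := by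
              linear_combination (-1/4)*e2 + (1/4)*(d₁:ℚ)*hd1q
            exact (mul_eq_zero.mp h1).resolve_left ha
          have hf0 : (f₀:ℚ) = 0 := by
            have h1 : (a₁:ℚ)*f₀ = 0 := by linear_combination key - (a₀:ℚ)*hf1
            exact (mul_eq_zero.mp h1).resolve_left ha
          exact ⟨hf0, hf1⟩
      · -- d₀ = 0, d₁ ≠ 0 : singular point (d₁, -2a₁)
        refine S1 a₀ a₁ d₀ d₁ f₀ f₁ b₀ b₁ b₂ e₀ e₁ e₂ hsmooth (d₁:ℂ) (-2*a₁)
          (fun hh => hd1 hh.1) ?_ ?_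
        · linear_combination (a₀:ℂ)*E2 - (a₁:ℂ)*E3 + (a₁:ℂ)*E1 + (a₁:ℂ)*E2
        · linear_combination -(a₁:ℂ)*E2
    · -- d₀ ≠ 0 : singular point (d₀, -2a₀)
      refine S1 a₀ a₁ d₀ d₁ f₀ f₁ b₀ b₁ b₂ e₀ e₁ e₂ hsmooth (d₀:ℂ) (-2*a₀)
        (fun hh => hd0 hh.1) ?_ ?_
      · linear_combination -(a₀:ℂ)*E1
      · linear_combination (a₁:ℂ)*E1 - (a₀:ℂ)*E3 + (a₀:ℂ)*E1 + (a₀:ℂ)*E2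
  have h6 : ∀ g : MvPolynomial (Fin 2) ℚ, 0 < g.totalDegree →
      ¬ (g ∣ binLin a₀ a₁ ∧ g ∣ binLin d₀ d₁ ∧ g ∣ binLin f₀ f₁) := by
    rintro g hg ⟨hga, hgd, hgf⟩
    obtain ⟨u, v, hne, hau, hdu⟩ := commonRoot g _ _ hg hga hgd hA
    obtain ⟨u', v', hne', hau', hfu'⟩ := commonRoot g _ _ hg hga hgf hA
    rw [aevalLin] at hau hdu hau' hfu'
    have hKd : (d₁:ℂ)*a₀ - d₀*a₁ = 0 := by
      rcases not_and_or.mp hne with hu | hv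
      · have h := mul_eq_zero.mp (show ((d₁:ℂ)*a₀ - d₀*a₁)*u = 0 by
          linear_combination (d₁:ℂ)*hau - (a₁:ℂ)*hdu)
        exact h.resolve_right hu
      · have h := mul_eq_zero.mp (show ((d₁:ℂ)*a₀ - d₀*a₁)*v = 0 by
          linear_combination (a₀:ℂ)*hdu - (d₀:ℂ)*hau)
        exact h.resolve_right hv
    have hKf : (f₁:ℂ)*a₀ - f₀*a₁ = 0 := by
      rcases not_and_or.mp hne' with hu | hv
      · have h := mul_eq_zero.mp (show ((f₁:ℂ)*a₀ - f₀*a₁)*u' = 0 by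
          linear_combination (f₁:ℂ)*hau' - (a₁:ℂ)*hfu')
        exact h.resolve_right hu
      · have h := mul_eq_zero.mp (show ((f₁:ℂ)*a₀ - f₀*a₁)*v' = 0 by
          linear_combination (a₀:ℂ)*hfu' - (f₀:ℂ)*hau')
        exact h.resolve_right hv
    have hKdq : (d₁:ℚ)*a₀ - d₀*a₁ = 0 := by exact_mod_cast hKd
    have hKfq : (f₁:ℚ)*a₀ - f₀*a₁ = 0 := by exact_mod_cast hKf
    by_cases ha0 : (a₀:ℚ) = 0
    · have ha1 : (a₁:ℚ) ≠ 0 := fun hh => haq ⟨ha0, hh⟩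
      refine S1' a₀ a₁ d₀ d₁ f₀ f₁ b₀ b₁ b₂ e₀ e₁ e₂ hsmooth ((d₁:ℚ)/a₁) ((f₁:ℚ)/a₁)
        ?_ ?_ ?_ ?_
      · rw [ha0]
        have : (d₀:ℚ)*a₁ = 0 := by linear_combination -hKdq + d₁*ha0
        simpa [ha1] using (mul_eq_zero.mp this).resolve_right ha1
      · field_simp
      · rw [ha0]
        have : (f₀:ℚ)*a₁ = 0 := by linear_combination -hKfq + f₁*ha0
        simpa [ha1] using (mul_eq_zero.mp this).resolve_right ha1
      · field_simp
    · refine S1' a₀ a₁ d₀ d₁ f₀ f₁ b₀ b₁ b₂ e₀ e₁ e₂ hsmooth ((d₀:ℚ)/a₀) ((f₀:ℚ)/a₀)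
        ?_ ?_ ?_ ?_
      · field_simp
      · field_simp
        linear_combination hKdq
      · field_simp
      · field_simp
        linear_combination hKfq
  have h7 : ∀ g : MvPolynomial (Fin 2) ℚ, 0 < g.totalDegree →
      ¬ (g ∣ binQuad b₀ b₁ b₂ ∧ g ∣ binQuad e₀ e₁ e₂) := by
    rintro g hg ⟨hgb, hge⟩
    obtain ⟨u, v, hne, hbu, heu⟩ := commonRoot g _ _ hg hgb hge hB
    rw [aevalQuad] at hbu heu
    exact S2 a₀ a₁ d₀ d₁ f₀ f₁ b₀ b₁ b₂ e₀ e₁ e₂ hsmooth u v hne hbu heu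
  exact ⟨hA, hB, hE, hF, hD, h6, h7⟩
end

section
/- Let a₀, a₁, d₀, d₁, f₀, f₁, b₀, b₁, b₂, e₀, e₁, e₂ be integers satisfying: (1) gcd(a₀,a₁,d₀,d₁,f₀,f₁) = 1 and gcd(b₀,b₁,b₂,e₀,e₁,e₂) = 1; (2) gcd(a₀b₀, 6) = 1 and 6 divides each of a₁, d₀, d₁, f₀, f₁, b₁, b₂, e₀, e₁, e₂. Then for every prime p there exist integers s₀, t₀ with p ∤ s₀ and p ∤ t₀ such that p does not divide gcd(b(s₀,t₀), e(s₀,t₀)) and p does not divide gcd(a(s₀,t₀), d(s₀,t₀), f(s₀,t₀)). -/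
open Polynomial

lemma aux_count (p : ℕ) [Fact p.Prime] (hp5 : 5 ≤ p) (P Q : Polynomial (ZMod p))
    (hP : P ≠ 0) (hQ : Q ≠ 0) (hdP : P.natDegree ≤ 2) (hdQ : Q.natDegree ≤ 1) :
    ∃ x : ZMod p, x ≠ 0 ∧ P.eval x ≠ 0 ∧ Q.eval x ≠ 0 := by
  classical
  set bad : Finset (ZMod p) := insert 0 (P.roots.toFinset ∪ Q.roots.toFinset) with hbad
  have h1 : P.roots.toFinset.card ≤ 2 :=
    le_trans (Multiset.toFinset_card_le _) (le_trans (Polynomial.card_roots' P) hdP)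
  have h2 : Q.roots.toFinset.card ≤ 1 :=
    le_trans (Multiset.toFinset_card_le _) (le_trans (Polynomial.card_roots' Q) hdQ)
  have hcard : bad.card ≤ 4 := by
    calc bad.card ≤ (P.roots.toFinset ∪ Q.roots.toFinset).card + 1 :=
          Finset.card_insert_le _ _
      _ ≤ P.roots.toFinset.card + Q.roots.toFinset.card + 1 := by
          have := Finset.card_union_le P.roots.toFinset Q.roots.toFinset
          omega
      _ ≤ 4 := by omega
  have hne : bad ≠ Finset.univ := by
    intro h
    have : (Finset.univ : Finset (ZMod p)).card = p := by
      simp [ZMod.card]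
    rw [h, this] at hcard
    omega
  obtain ⟨x, hx⟩ : ∃ x, x ∉ bad := by
    by_contra hc
    push_neg at hc
    exact hne (Finset.eq_univ_iff_forall.mpr hc)
  refine ⟨x, ?_, ?_, ?_⟩
  · intro h; exact hx (by simp [hbad, h])
  · intro h
    exact hx (by simp [hbad, Polynomial.mem_roots, hP, Polynomial.IsRoot, h])
  · intro h
    exact hx (by simp [hbad, Polynomial.mem_roots, hQ, Polynomial.IsRoot, h])

lemma quad_eq_zero {R : Type*} [CommRing R] {α β γ : R}
    (h : C α + C β * X + C γ * X ^ 2 = 0) : α = 0 ∧ β = 0 ∧ γ = 0 := by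
  refine ⟨?_, ?_, ?_⟩
  · have := congrArg (fun q => Polynomial.coeff q 0) h
    simpa using this
  · have := congrArg (fun q => Polynomial.coeff q 1) h
    simpa [Polynomial.coeff_X_pow] using this
  · have := congrArg (fun q => Polynomial.coeff q 2) h
    simpa [Polynomial.coeff_X_pow] using this

lemma lin_eq_zero {R : Type*} [CommRing R] {α β : R}
    (h : C α + C β * X = 0) : α = 0 ∧ β = 0 := by
  constructor
  · have := congrArg (fun q => Polynomial.coeff q 0) h
    simpa using this
  · have := congrArg (fun q => Polynomial.coeff q 1) h
    simpa using this

/-- Let `a₀,a₁,d₀,d₁,f₀,f₁,b₀,b₁,b₂,e₀,e₁,e₂` be integers with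
`gcd(a₀,a₁,d₀,d₁,f₀,f₁) = 1`, `gcd(b₀,b₁,b₂,e₀,e₁,e₂) = 1`, `gcd(a₀b₀,6) = 1`, and
`6` dividing each of `a₁,d₀,d₁,f₀,f₁,b₁,b₂,e₀,e₁,e₂`. Then for every prime `p` there
are integers `s₀, t₀` not divisible by `p` such that `p ∤ gcd(b(s₀,t₀), e(s₀,t₀))`
and `p ∤ gcd(a(s₀,t₀), d(s₀,t₀), f(s₀,t₀))`, where `a(s,t) = a₀s + a₁t`,
`d(s,t) = d₀s + d₁t`, `f(s,t) = f₀s + f₁t`, `b(s,t) = b₀s² + b₁st + b₂t²`,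
`e(s,t) = e₀s² + e₁st + e₂t²`. -/
theorem statement11 (a₀ a₁ d₀ d₁ f₀ f₁ b₀ b₁ b₂ e₀ e₁ e₂ : ℤ)
    (h1 : Nat.gcd (a₀.gcd a₁) (Nat.gcd (d₀.gcd d₁) (f₀.gcd f₁)) = 1)
    (h2 : Nat.gcd (b₀.gcd b₁) (Nat.gcd (b₂.gcd e₀) (e₁.gcd e₂)) = 1)
    (h3 : (a₀ * b₀).gcd 6 = 1)
    (h4 : (6 : ℤ) ∣ a₁ ∧ (6 : ℤ) ∣ d₀ ∧ (6 : ℤ) ∣ d₁ ∧ (6 : ℤ) ∣ f₀ ∧ (6 : ℤ) ∣ f₁ ∧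
      (6 : ℤ) ∣ b₁ ∧ (6 : ℤ) ∣ b₂ ∧ (6 : ℤ) ∣ e₀ ∧ (6 : ℤ) ∣ e₁ ∧ (6 : ℤ) ∣ e₂)
    (p : ℕ) (hp : p.Prime) :
    ∃ s₀ t₀ : ℤ, ¬ (p : ℤ) ∣ s₀ ∧ ¬ (p : ℤ) ∣ t₀ ∧
      ¬ ((p : ℤ) ∣ (b₀ * s₀ ^ 2 + b₁ * s₀ * t₀ + b₂ * t₀ ^ 2) ∧
         (p : ℤ) ∣ (e₀ * s₀ ^ 2 + e₁ * s₀ * t₀ + e₂ * t₀ ^ 2)) ∧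
      ¬ ((p : ℤ) ∣ (a₀ * s₀ + a₁ * t₀) ∧ (p : ℤ) ∣ (d₀ * s₀ + d₁ * t₀) ∧
         (p : ℤ) ∣ (f₀ * s₀ + f₁ * t₀)) := by
  obtain ⟨ha₁, hd₀, hd₁, hf₀, hf₁, hb₁, hb₂, he₀, he₁, he₂⟩ := h4
  have hpone : ¬ (p : ℤ) ∣ 1 := by
    intro h
    have h' := Int.le_of_dvd one_pos h
    have := hp.two_le
    omega
  by_cases hp6 : (p : ℤ) ∣ 6
  · -- p = 2 or 3 case: take s₀ = t₀ = 1
    refine ⟨1, 1, hpone, hpone, ?_, ?_⟩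
    · rintro ⟨hb, -⟩
      have hpb₀ : (p : ℤ) ∣ b₀ := by
        have h' : (p : ℤ) ∣ b₁ * 1 * 1 + b₂ * 1 ^ 2 :=
          dvd_add (Dvd.dvd.mul_right (Dvd.dvd.mul_right (dvd_trans hp6 hb₁) 1) 1)
            (Dvd.dvd.mul_right (dvd_trans hp6 hb₂) _)
        have := dvd_sub hb h'
        simpa using this
      have : (p : ℤ) ∣ ((a₀ * b₀).gcd 6 : ℤ) :=
        Int.dvd_coe_gcd (hpb₀.mul_left a₀) hp6
      rw [h3] at this
      exact hpone (by simpa using this)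
    · rintro ⟨ha, -⟩
      have hpa₀ : (p : ℤ) ∣ a₀ := by
        have := dvd_sub ha (Dvd.dvd.mul_right (dvd_trans hp6 ha₁) 1)
        simpa using this
      have : (p : ℤ) ∣ ((a₀ * b₀).gcd 6 : ℤ) :=
        Int.dvd_coe_gcd (hpa₀.mul_right b₀) hp6
      rw [h3] at this
      exact hpone (by simpa using this)
  · -- p ≥ 5
    haveI : Fact p.Prime := ⟨hp⟩
    have hp5 : 5 ≤ p := by
      rcases Nat.lt_or_ge p 5 with h | h
      · interval_cases p <;>
          first
          | exact absurd hp (by decide)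
          | norm_num at hp6
      · exact h
    have cast0 : ∀ n : ℤ, (p:ℤ) ∣ n ↔ ((n : ZMod p) = 0) :=
      fun n => ((ZMod.intCast_zmod_eq_zero_iff_dvd n p)).symm
    have hpdvd1 : ¬ (p ∣ 1) := fun h => hp.one_lt.ne' (Nat.dvd_one.mp h)
    -- choose nonzero quadratic P
    obtain ⟨P, hPne, hPdeg, hPimp⟩ :
        ∃ P : Polynomial (ZMod p), P ≠ 0 ∧ P.natDegree ≤ 2 ∧
          ∀ x : ZMod p,
            ((b₀:ZMod p) + b₁ * x + b₂ * x ^ 2 = 0 ∧ (e₀:ZMod p) + e₁ * x + e₂ * x ^ 2 = 0) →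
              P.eval x = 0 := by
      by_cases hB : (b₀ : ZMod p) = 0 ∧ (b₁ : ZMod p) = 0 ∧ (b₂ : ZMod p) = 0
      · -- then E must be nonzero
        have hE : ¬ ((e₀ : ZMod p) = 0 ∧ (e₁ : ZMod p) = 0 ∧ (e₂ : ZMod p) = 0) := by
          rintro ⟨k0, k1, k2⟩
          obtain ⟨j0, j1, j2⟩ := hB
          rw [← cast0] at k0 k1 k2 j0 j1 j2
          have g1 : p ∣ b₀.gcd b₁ := Int.natCast_dvd_natCast.mp (Int.dvd_coe_gcd j0 j1)
          have g2 : p ∣ b₂.gcd e₀ := Int.natCast_dvd_natCast.mp (Int.dvd_coe_gcd j2 k0)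
          have g3 : p ∣ e₁.gcd e₂ := Int.natCast_dvd_natCast.mp (Int.dvd_coe_gcd k1 k2)
          exact hpdvd1 (h2 ▸ Nat.dvd_gcd g1 (Nat.dvd_gcd g2 g3))
        refine ⟨C (e₀:ZMod p) + C (e₁:ZMod p) * X + C (e₂:ZMod p) * X ^ 2, ?_, ?_, ?_⟩
        · intro h0
          exact hE (quad_eq_zero h0)
        · compute_degree
        · intro x hx
          simpa using hx.2
      · refine ⟨C (b₀:ZMod p) + C (b₁:ZMod p) * X + C (b₂:ZMod p) * X ^ 2, ?_, ?_, ?_⟩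
        · intro h0
          exact hB (quad_eq_zero h0)
        · compute_degree
        · intro x hx
          simpa using hx.1
    -- choose nonzero linear Q
    obtain ⟨Q, hQne, hQdeg, hQimp⟩ :
        ∃ Q : Polynomial (ZMod p), Q ≠ 0 ∧ Q.natDegree ≤ 1 ∧
          ∀ x : ZMod p,
            ((a₀:ZMod p) + a₁ * x = 0 ∧ (d₀:ZMod p) + d₁ * x = 0 ∧ (f₀:ZMod p) + f₁ * x = 0) →
              Q.eval x = 0 := by
      have hnotall : ¬ (((a₀:ZMod p) = 0 ∧ (a₁:ZMod p) = 0) ∧ ((d₀:ZMod p) = 0 ∧ (d₁:ZMod p) = 0)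
          ∧ ((f₀:ZMod p) = 0 ∧ (f₁:ZMod p) = 0)) := by
        rintro ⟨⟨j0, j1⟩, ⟨j2, j3⟩, ⟨j4, j5⟩⟩
        rw [← cast0] at j0 j1 j2 j3 j4 j5
        have g1 : p ∣ a₀.gcd a₁ := Int.natCast_dvd_natCast.mp (Int.dvd_coe_gcd j0 j1)
        have g2 : p ∣ d₀.gcd d₁ := Int.natCast_dvd_natCast.mp (Int.dvd_coe_gcd j2 j3)
        have g3 : p ∣ f₀.gcd f₁ := Int.natCast_dvd_natCast.mp (Int.dvd_coe_gcd j4 j5)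
        exact hpdvd1 (h1 ▸ Nat.dvd_gcd g1 (Nat.dvd_gcd g2 g3))
      by_cases hA : (a₀:ZMod p) = 0 ∧ (a₁:ZMod p) = 0
      · by_cases hD : (d₀:ZMod p) = 0 ∧ (d₁:ZMod p) = 0
        · -- F nonzero
          refine ⟨C (f₀:ZMod p) + C (f₁:ZMod p) * X, ?_, ?_, ?_⟩
          · intro h0
            exact hnotall ⟨hA, hD, lin_eq_zero h0⟩
          · compute_degree
          · intro x hx
            simpa using hx.2.2
        · refine ⟨C (d₀:ZMod p) + C (d₁:ZMod p) * X, ?_, ?_, ?_⟩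
          · intro h0
            exact hD (lin_eq_zero h0)
          · compute_degree
          · intro x hx
            simpa using hx.2.1
      · refine ⟨C (a₀:ZMod p) + C (a₁:ZMod p) * X, ?_, ?_, ?_⟩
        · intro h0
          exact hA (lin_eq_zero h0)
        · compute_degree
        · intro x hx
          simpa using hx.1
    obtain ⟨x, hx0, hPx, hQx⟩ := aux_count p hp5 P Q hPne hQne hPdeg hQdeg
    refine ⟨1, (x.val : ℤ), hpone, ?_, ?_, ?_⟩
    · intro h
      rw [Int.natCast_dvd_natCast] at h
      have hlt : x.val < p := ZMod.val_lt x
      have hv : x.val = 0 := Nat.eq_zero_of_dvd_of_lt h hlt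
      exact hx0 (by rwa [← ZMod.val_eq_zero])
    · rintro ⟨hb, he⟩
      rw [cast0] at hb he
      push_cast at hb he
      rw [ZMod.natCast_val, ZMod.cast_id] at hb he
      exact hPx (hPimp x ⟨by linear_combination hb, by linear_combination he⟩)
    · rintro ⟨ha, hd, hf⟩
      rw [cast0] at ha hd hf
      push_cast at ha hd hf
      rw [ZMod.natCast_val, ZMod.cast_id] at ha hd hf
      exact hQx (hQimp x ⟨by linear_combination ha, by linear_combination hd,
        by linear_combination hf⟩)
end
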